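/- Let A be a zero-dimensional local commutative K-algebra with maximal ideal m, q an m-primary ideal, R = A/q, π the quotient map. Suppose g ∈ A with π(g) a non-zero socle element of R, and h ∈ Ann_A(q) with gh ≠ 0. If g₁, ..., g_r ∈ A \ {0} are such that π(g₁), ..., π(g_r) lie in the principal ideal (π(g)) of R and are K-linearly independent, then g₁h, ..., g_rh are K-linearly independent in A. -/

import Mathlib

/- STATEMENT 5: With A Artinian local K-algebra with maximal ideal m, q an
m-primary ideal, R = A/q, π the quotient map, g ∈ A with π(g) a non-zero socle
element of R, and h ∈ Ann_A(q) with gh ≠ 0: if g₁, ..., g_r ∈ A \ {0} have images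
π(g₁), ..., π(g_r) lying in the principal ideal (π(g)) of R and K-linearly
independent, then g₁h, ..., g_rh are K-linearly independent in A. -/
theorem linearIndependent_mul_annihilator
    (K A : Type*) [Field K] [CommRing A] [Algebra K A]
    [IsArtinianRing A] [IsLocalRing A]
    (q : Ideal A) (hq : q.radical = IsLocalRing.maximalIdeal A)
    (g : A) (hg_ne : g ∉ q)
    (hg_socle : ∀ a ∈ IsLocalRing.maximalIdeal A, g * a ∈ q)
    (h : A) (hh : ∀ a ∈ q, h * a = 0) (hgh : g * h ≠ 0)
    (r : ℕ) (gs : Fin r → A) (hgs_ne : ∀ i, gs i ≠ 0)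
    (hgs_mem : ∀ i, Ideal.Quotient.mk q (gs i) ∈ Ideal.span {Ideal.Quotient.mk q g})
    (hli : LinearIndependent K (fun i => Ideal.Quotient.mk q (gs i))) :
    LinearIndependent K (fun i => gs i * h) := by
  rw [Fintype.linearIndependent_iff] at hli ⊢
  intro c hc
  set π := Ideal.Quotient.mkₐ K q with hπ
  set x : A := ∑ i, c i • gs i with hxdef
  have hx : x * h = 0 := by
    rw [hxdef, Finset.sum_mul]
    simpa [smul_mul_assoc] using hc
  have hπx : π x = ∑ i, c i • π (gs i) := by
    rw [hxdef, map_sum]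
    simp only [map_smul]
  have hmem : π x ∈ Ideal.span {Ideal.Quotient.mk q g} := by
    rw [hπx]
    refine Submodule.sum_mem _ fun i _ => ?_
    rw [Algebra.smul_def]
    exact Ideal.mul_mem_left _ _ (hgs_mem i)
  rw [Ideal.mem_span_singleton] at hmem
  obtain ⟨z, hz⟩ := hmem
  obtain ⟨u, rfl⟩ := Ideal.Quotient.mk_surjective z
  have hx0 : π x = 0 := by
    rcases (em (u ∈ IsLocalRing.maximalIdeal A)).symm.imp IsLocalRing.notMem_maximalIdeal.mp id with hu | hu
    · exfalso
      have he : x - g * u ∈ q := by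
        rw [← Ideal.Quotient.eq_zero_iff_mem, map_sub, map_mul, sub_eq_zero]
        have : π x = Ideal.Quotient.mk q x := rfl
        rw [this] at hz
        exact hz
      have hgu : g * u * h = 0 := by
        have h1 : h * (x - g * u) = 0 := hh _ he
        have : x * h - g * u * h = 0 := by
          rw [← h1]; ring
        linear_combination hx - this
      obtain ⟨v, hv⟩ := hu.exists_right_inv
      apply hgh
      calc g * h = (g * u * h) * v := by rw [mul_assoc (g*u), mul_comm h v,
        ← mul_assoc, mul_assoc g, hv, mul_one]
        _ = 0 := by rw [hgu, zero_mul]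
    · have hgu : g * u ∈ q := hg_socle u hu
      rw [hz, ← map_mul, Ideal.Quotient.eq_zero_iff_mem]
      exact hgu
  refine hli c ?_
  have : ∑ i, c i • π (gs i) = 0 := by rw [← hπx, hx0]
  exact this
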